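/- arXiv:0912.1284 — 3 statements merged into one kernel-verified Lean document; each statement's English description precedes it below -/
import Mathlib

section
/- Let S be a monoid, G a subgroup of S with identity e, and let C = Gs be a right coset of G (so there exists s' with Gss' = G). Then for all g in G, g·s·s' = g, i.e., right multiplication by ss' restricted to G is the identity map. -/
/-- If `Gs` is a right coset of a subgroup `G` of a monoid `S`,
witnessed by `s'` with `Gss' = G`, then right multiplication by `ss'` is a
bijection of `G`, and a representative `s''` can be chosen so that
`g s s'' = g` for all `g ∈ G`. -/
theorem coset_representative_fixes_subgroup {S : Type*} [Monoid S] (G : Set S) (e : S)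
    (hmul : ∀ a ∈ G, ∀ b ∈ G, a * b ∈ G)
    (heG : e ∈ G) (hee : e * e = e)
    (hid : ∀ g ∈ G, e * g = g ∧ g * e = g)
    (hinv : ∀ g ∈ G, ∃ h ∈ G, g * h = e ∧ h * g = e)
    (s s' : S)
    (hcoset : (fun g => g * (s * s')) '' G = G) :
    Set.BijOn (fun g => g * (s * s')) G G ∧
      ∃ s'' : S, ∀ g ∈ G, g * s * s'' = g := by
  have huG : e * (s * s') ∈ G := by
    rw [← hcoset]; exact Set.mem_image_of_mem _ heG
  obtain ⟨u', hu'G, huu', hu'u⟩ := hinv _ huG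
  have key : ∀ g ∈ G, g * (s * s') = g * (e * (s * s')) := fun g hg => by
    rw [← mul_assoc g e, (hid g hg).2]
  have fix : ∀ g ∈ G, g * (s * s') * u' = g := fun g hg => by
    rw [key g hg, mul_assoc, huu', (hid g hg).2]
  constructor
  · refine ⟨fun g hg => ?_, fun g1 h1 g2 h2 hEq => ?_, fun h hh => ?_⟩
    · show g * (s * s') ∈ G
      rw [key g hg]; exact hmul g hg _ huG
    · have := congrArg (fun x => x * u') hEq
      simpa [fix g1 h1, fix g2 h2] using this
    · refine ⟨h * u', hmul h hh u' hu'G, ?_⟩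
      show h * u' * (s * s') = h
      rw [key _ (hmul h hh u' hu'G), mul_assoc, hu'u, (hid h hh).2]
  · exact ⟨s' * u', fun g hg => by
      rw [mul_assoc g s, ← mul_assoc s, ← mul_assoc g, fix g hg]⟩
end

section
/- Let S be a monoid and H a maximal subgroup of S (an H-class containing an idempotent). Then the right cosets of H (sets Hs with Hss' = H for some s') are precisely the H-classes of S contained in the R-class of H. In particular, H has finite translational index if and only if the R-class of H contains finitely many H-classes. -/
/-- Green's R relation on a monoid: `x R y ↔ xS = yS`. -/
def GreenR {S : Type*} [Monoid S] (x y : S) : Prop :=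
  (∃ u, x * u = y) ∧ (∃ v, y * v = x)

/-- Green's L relation on a monoid: `x L y ↔ Sx = Sy`. -/
def GreenL {S : Type*} [Monoid S] (x y : S) : Prop :=
  (∃ u, u * x = y) ∧ (∃ v, v * y = x)

/-- Green's H relation. -/
def GreenH {S : Type*} [Monoid S] (x y : S) : Prop :=
  GreenR x y ∧ GreenL x y

/-- Elements H-related to an idempotent absorb it on both sides. -/
lemma greenH_mul_e {S : Type*} [Monoid S] {e h : S} (hee : e * e = e)
    (hh : GreenH e h) : h * e = h ∧ e * h = h := by
  obtain ⟨⟨⟨u1, hu1⟩, -⟩, ⟨w1, hw1⟩, -⟩ := hh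
  constructor
  · calc h * e = w1 * e * e := by rw [hw1]
      _ = w1 * e := by rw [mul_assoc, hee]
      _ = h := hw1
  · calc e * h = e * (e * u1) := by rw [hu1]
      _ = e * u1 := by rw [← mul_assoc, hee]
      _ = h := hu1

/-- Green's lemma (key step): if `e R x` then the H-class of `x` is `H·x`
where `H` is the H-class of `e`. -/
lemma Hclass_eq_coset {S : Type*} [Monoid S] {e x : S} (hee : e * e = e)
    (hRx : GreenR e x) :
    {y | GreenH x y} = (fun g => g * x) '' {z | GreenH e z} := by
  obtain ⟨⟨u, hu⟩, ⟨v, hv⟩⟩ := hRx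
  have hex : e * x = x := by
    calc e * x = e * (e * u) := by rw [hu]
      _ = e * u := by rw [← mul_assoc, hee]
      _ = x := hu
  ext y
  constructor
  · -- y H x → y ∈ H·x
    rintro ⟨⟨⟨c, hc⟩, ⟨d, hd⟩⟩, ⟨a, ha⟩, ⟨b, hb⟩⟩
    have hey : e * y = y := by
      calc e * y = e * (x * c) := by rw [hc]
        _ = (e * x) * c := by rw [mul_assoc]
        _ = y := by rw [hex, hc]
    have hyvx : y * v * x = y := by
      calc y * v * x = a * x * v * x := by rw [ha]
        _ = a * (x * v) * x := by rw [mul_assoc a x v]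
        _ = a * (e * x) := by rw [hv, mul_assoc]
        _ = y := by rw [hex, ha]
    refine ⟨y * v, ⟨⟨⟨y * v, ?_⟩, ⟨x * d * v, ?_⟩⟩, ⟨y * v, ?_⟩, ⟨b, ?_⟩⟩, ?_⟩
    · show e * (y * v) = y * v
      rw [← mul_assoc, hey]
    · calc y * v * (x * d * v) = (y * v * x) * d * v := by
            rw [← mul_assoc, ← mul_assoc]
        _ = (y * d) * v := by rw [hyvx]
        _ = e := by rw [hd, hv]
    · calc y * v * e = y * v * (x * v) := by rw [hv]
        _ = (y * v * x) * v := by rw [← mul_assoc]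
        _ = y * v := by rw [hyvx]
    · calc b * (y * v) = (b * y) * v := by rw [← mul_assoc]
        _ = e := by rw [hb, hv]
    · show y * v * x = y
      exact hyvx
  · -- h*x for h ∈ H is H-related to x
    rintro ⟨h, hh, rfl⟩
    have ⟨hhe, heh⟩ := greenH_mul_e hee hh
    obtain ⟨⟨⟨u1, hu1⟩, ⟨p, hp⟩⟩, ⟨w1, hw1⟩, ⟨w, hw⟩⟩ := hh
    refine ⟨⟨⟨v * u1 * x, ?_⟩, ⟨v * p * x, ?_⟩⟩, ⟨h, rfl⟩, ⟨w, ?_⟩⟩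
    · calc x * (v * u1 * x) = (x * v) * u1 * x := by
            rw [← mul_assoc, ← mul_assoc]
        _ = h * x := by rw [hv, hu1]
    · calc h * x * (v * p * x) = h * (x * v) * p * x := by
            rw [← mul_assoc, ← mul_assoc, mul_assoc h x v]
        _ = (h * e) * p * x := by rw [hv]
        _ = e * x := by rw [hhe, hp]
        _ = x := hex
    · calc w * (h * x) = (w * h) * x := by rw [← mul_assoc]
        _ = x := by rw [hw, hex]

/-- For a maximal subgroup `H` of a monoid `S` (the H-class of an
idempotent `e`), the right cosets of `H` are precisely the H-classes of `S`
contained in the R-class of `H`; in particular `H` has finite translational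
index iff the R-class of `H` contains finitely many H-classes. -/
theorem cosets_of_maximal_subgroup_are_Hclasses {S : Type*} [Monoid S]
    (e : S) (hee : e * e = e) (H : Set S) (hH : H = {x | GreenH e x}) :
    {C : Set S | ∃ s s' : S, C = (fun g => g * s) '' H ∧
        (fun g => g * (s * s')) '' H = H} =
      {C : Set S | ∃ x : S, GreenR e x ∧ C = {y | GreenH x y}} ∧
    ({C : Set S | ∃ s s' : S, C = (fun g => g * s) '' H ∧
        (fun g => g * (s * s')) '' H = H}.Finite ↔
      {C : Set S | ∃ x : S, GreenR e x ∧ C = {y | GreenH x y}}.Finite) := by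
  subst hH
  have heH : e ∈ {x | GreenH e x} := ⟨⟨⟨1, mul_one e⟩, ⟨1, mul_one e⟩⟩,
    ⟨1, one_mul e⟩, ⟨1, one_mul e⟩⟩
  have main : {C : Set S | ∃ s s' : S, C = (fun g => g * s) '' {x | GreenH e x} ∧
      (fun g => g * (s * s')) '' {x | GreenH e x} = {x | GreenH e x}} =
      {C : Set S | ∃ x : S, GreenR e x ∧ C = {y | GreenH x y}} := by
    ext C
    constructor
    · rintro ⟨s, s', rfl, himg⟩
      have hk : e * (s * s') ∈ {x | GreenH e x} := by
        rw [← himg]; exact ⟨e, heH, rfl⟩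
      obtain ⟨⟨-, ⟨p, hp⟩⟩, -⟩ := hk
      have hRx : GreenR e (e * s) := by
        refine ⟨⟨s, rfl⟩, ⟨s' * p, ?_⟩⟩
        calc e * s * (s' * p) = e * (s * s') * p := by simp only [mul_assoc]
          _ = e := hp
      refine ⟨e * s, hRx, ?_⟩
      rw [Hclass_eq_coset hee hRx]
      ext y
      constructor
      · rintro ⟨h, hh, rfl⟩
        exact ⟨h, hh, by
          show h * (e * s) = h * s
          rw [← mul_assoc, (greenH_mul_e hee hh).1]⟩
      · rintro ⟨h, hh, rfl⟩
        exact ⟨h, hh, by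
          show h * s = h * (e * s)
          rw [← mul_assoc, (greenH_mul_e hee hh).1]⟩
    · rintro ⟨x, hRx, rfl⟩
      obtain ⟨⟨u, hu⟩, ⟨v, hv⟩⟩ := hRx
      refine ⟨x, v, (Hclass_eq_coset hee ⟨⟨u, hu⟩, ⟨v, hv⟩⟩), ?_⟩
      rw [hv]
      ext y
      constructor
      · rintro ⟨h, hh, rfl⟩
        show h * e ∈ {x | GreenH e x}
        rw [(greenH_mul_e hee hh).1]; exact hh
      · intro hy
        exact ⟨y, hy, (greenH_mul_e hee hy).1⟩
  exact ⟨main, by rw [main]⟩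
end

section
/- Let S be a monoid, G a subgroup of S, and consider the action of S on the set of right cosets C = {C_i : i ∈ I} ∪ {C₀} given by C_i · s = C_i s if C_i s is again a coset, and C₀ otherwise, with C₀ absorbing. Then this defines a monoid action: C · 1 = C for all C, and (C · s) · t = C · (st) for all s, t ∈ S. -/
/-- `C` is a right coset of the subgroup `G` of a monoid `S`: `C = Gs` for
some `s` with `Gss' = G` for some `s'`. -/
def IsCosetOf {S : Type*} [Monoid S] (G : Set S) (C : Set S) : Prop :=
  ∃ s s' : S, C = (fun g => g * s) '' G ∧ (fun g => g * (s * s')) '' G = G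

open scoped Classical in
/-- The action of `S` on the right cosets of `G` together with an absorbing
point `C₀` (modelled as `none`): `C · s = Cs` if `Cs` is a coset, else `C₀`. -/
noncomputable def cosetAct {S : Type*} [Monoid S] (G : Set S) :
    Option (Set S) → S → Option (Set S) := fun o s =>
  match o with
  | none => none
  | some C =>
    if IsCosetOf G ((fun g => g * s) '' C) then some ((fun g => g * s) '' C)
    else none

/-- The above defines a monoid action on `{cosets of G} ∪ {C₀}`:
`C · 1 = C` and `(C · s) · t = C · (st)`. -/
theorem cosetAct_is_monoid_action {S : Type*} [Monoid S] (G : Set S) (e : S)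
    (hmul : ∀ a ∈ G, ∀ b ∈ G, a * b ∈ G)
    (heG : e ∈ G) (hee : e * e = e)
    (hid : ∀ g ∈ G, e * g = g ∧ g * e = g)
    (hinv : ∀ g ∈ G, ∃ h ∈ G, g * h = e ∧ h * g = e) :
    (∀ o : Option (Set S), (o = none ∨ ∃ C : Set S, o = some C ∧ IsCosetOf G C) →
      cosetAct G o 1 = o) ∧
    (∀ o : Option (Set S), (o = none ∨ ∃ C : Set S, o = some C ∧ IsCosetOf G C) →
      ∀ s t : S, cosetAct G (cosetAct G o s) t = cosetAct G o (s * t)) := by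

  have himg : ∀ (X : Set S) (a b : S),
      (fun g => g * b) '' ((fun g => g * a) '' X) = (fun g => g * (a * b)) '' X := by
    intro X a b
    rw [Set.image_image]
    simp [mul_assoc]
  constructor
  · rintro o (rfl | ⟨C, rfl, hC⟩)
    · rfl
    · simp [cosetAct, hC]
  · rintro o (rfl | ⟨C, rfl, hC⟩) s t
    · rfl
    · by_cases hs : IsCosetOf G ((fun g => g * s) '' C)
      · simp only [cosetAct, if_pos hs, himg]
        congr 1
        rw [himg]
      · simp only [cosetAct, if_neg hs]
        rw [if_neg]
        intro hst
        apply hs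
        obtain ⟨u, u', hCu, _⟩ := hC
        obtain ⟨v, v', hv1, hv2⟩ := hst
        refine ⟨u * s, t * v', ?_, ?_⟩
        · rw [hCu, himg]
        · have key : (fun g => g * (u * (s * t))) '' G = (fun g => g * v) '' G := by
            rw [← himg, ← hCu, hv1]
          have hassoc : u * s * (t * v') = u * (s * t) * v' := by
            simp only [mul_assoc]
          rw [hassoc, ← himg, key, himg, hv2]
end
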